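/- arXiv:2102.08097 — 2 statements merged into one kernel-verified Lean document; each statement's English description precedes it below -/
import Mathlib

section
/- Let 1 < p < ∞ and 1 < q < ∞ with 1/p + 1/q = 1. For every ε > 0 there exists δ > 0 with the following property: if a, b > 0 satisfy a^p/p + b^q/q ≤ ab/(1−δ), then |a^{p/q}/b − 1| < ε. -/
open Set

/-- Derivative of the auxiliary function. -/
private lemma statement8_deriv (p q : ℝ) (hp : 1 < p) (hq0 : 0 < q) (s : ℝ) (hs : 0 < s) :
    HasDerivAt (fun s : ℝ => s ^ (p - 1) / p + s⁻¹ / q)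
      ((p - 1) * s ^ (p - 1 - 1) / p + (-(s ^ 2)⁻¹) / q) s := by
  exact ((Real.hasDerivAt_rpow_const (Or.inl hs.ne')).div_const p).add
    ((hasDerivAt_inv hs.ne').div_const q)

/-- Lemma 3.7, a stable Young inequality. Let `1 < p, q < ∞` be conjugate
exponents. For every `ε > 0` there exists `δ > 0` such that whenever `a, b > 0` satisfy
`a^p/p + b^q/q ≤ ab/(1−δ)`, one has `|a^{p/q}/b − 1| < ε`. -/
theorem statement8 (p q : ℝ) (hp : 1 < p) (hq : 1 < q) (hpq : 1 / p + 1 / q = 1) :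
    ∀ ε : ℝ, 0 < ε → ∃ δ : ℝ, 0 < δ ∧
      ∀ a b : ℝ, 0 < a → 0 < b →
        a ^ p / p + b ^ q / q ≤ a * b / (1 - δ) →
        |a ^ (p / q) / b - 1| < ε := by
  intro ε hε
  have hp0 : (0:ℝ) < p := lt_trans one_pos hp
  have hq0 : (0:ℝ) < q := lt_trans one_pos hq
  have hpq' : p + q = p * q := by
    field_simp at hpq; linarith
  have hpq1 : p - 1 = p / q := by
    field_simp; nlinarith
  have hqp1 : q / p = q - 1 := by
    field_simp; nlinarith
  set ε' : ℝ := min ε (1/2) with hε'def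
  have hε' : 0 < ε' := lt_min hε (by norm_num)
  have hε'le : ε' ≤ ε := min_le_left _ _
  have hε'half : ε' ≤ 1/2 := min_le_right _ _
  set φ : ℝ → ℝ := fun s => s ^ (p - 1) / p + s⁻¹ / q with hφdef
  -- derivative formula and continuity
  have hderiv := statement8_deriv p q hp hq0
  have hcont : ∀ s : ℝ, 0 < s → ContinuousAt φ s := fun s hs =>
    (hderiv s hs).continuousAt
  -- strict monotonicity on [1, ∞)
  have hmono : StrictMonoOn φ (Ici 1) := by
    apply strictMonoOn_of_deriv_pos (convex_Ici 1)
      (fun s hs => (hcont s (lt_of_lt_of_le one_pos hs)).continuousWithinAt)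
    intro s hs
    rw [interior_Ici] at hs
    have hs1 : (1:ℝ) < s := hs
    have hs0 : (0:ℝ) < s := one_pos.trans hs1
    rw [(hderiv s hs0).deriv]
    have h1 : (p - 1) * s ^ (p - 1 - 1) / p = s ^ (p - 2) / q := by
      have : (p - 1) / p = 1 / q := by field_simp; linarith
      rw [show p - 1 - 1 = p - 2 by ring]
      field_simp
      nlinarith [Real.rpow_pos_of_pos hs0 (p-2)]
    have h2 : (s ^ 2)⁻¹ = s ^ (-2 : ℝ) := by
      rw [Real.rpow_neg hs0.le, show ((2:ℝ)) = ((2:ℕ):ℝ) by norm_num,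
        Real.rpow_natCast]
    have h3 : s ^ (-2:ℝ) < s ^ (p - 2) :=
      Real.rpow_lt_rpow_of_exponent_lt hs1 (by linarith)
    rw [h1, h2, neg_div, ← sub_eq_add_neg, ← sub_div]
    exact div_pos (by linarith) hq0
  -- strict antitonicity on (0, 1]
  have hanti : StrictAntiOn φ (Ioc 0 1) := by
    apply strictAntiOn_of_deriv_neg (convex_Ioc 0 1)
      (fun s hs => (hcont s hs.1).continuousWithinAt)
    intro s hs
    rw [interior_Ioc] at hs
    have hs0 : (0:ℝ) < s := hs.1
    have hs1 : s < 1 := hs.2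
    rw [(hderiv s hs0).deriv]
    have h1 : (p - 1) * s ^ (p - 1 - 1) / p = s ^ (p - 2) / q := by
      rw [show p - 1 - 1 = p - 2 by ring]
      field_simp
      nlinarith [Real.rpow_pos_of_pos hs0 (p-2)]
    have h2 : (s ^ 2)⁻¹ = s ^ (-2 : ℝ) := by
      rw [Real.rpow_neg hs0.le, show ((2:ℝ)) = ((2:ℕ):ℝ) by norm_num,
        Real.rpow_natCast]
    have h3 : s ^ (p - 2) < s ^ (-2:ℝ) :=
      Real.rpow_lt_rpow_of_exponent_gt hs0 hs1 (by linarith)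
    rw [h1, h2, neg_div, ← sub_eq_add_neg, ← sub_div]
    exact div_neg_of_neg_of_pos (by linarith) hq0
  have hφ1 : φ 1 = 1 := by
    simp only [hφdef, Real.one_rpow, inv_one]
    field_simp at hpq ⊢; linarith
  -- the two comparison points
  set s₁ : ℝ := (1 + ε') ^ (q / p) with hs₁def
  set s₂ : ℝ := (1 - ε') ^ (q / p) with hs₂def
  have hqp0 : 0 < q / p := div_pos hq0 hp0
  have hs₁gt : 1 < s₁ := Real.one_lt_rpow_iff_of_pos (by linarith) |>.mpr
    (Or.inl ⟨by linarith, hqp0⟩)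
  have h1ε'0 : (0:ℝ) < 1 - ε' := by linarith
  have hs₂pos : 0 < s₂ := Real.rpow_pos_of_pos h1ε'0 _
  have hs₂lt : s₂ < 1 := Real.rpow_lt_one h1ε'0.le (by linarith) hqp0
  have hφs₁ : 1 < φ s₁ := by
    rw [← hφ1]
    exact hmono (Set.mem_Ici.mpr (le_refl 1)) (Set.mem_Ici.mpr (le_of_lt hs₁gt)) hs₁gt
  have hφs₂ : 1 < φ s₂ := by
    rw [← hφ1]
    exact hanti ⟨hs₂pos, hs₂lt.le⟩ ⟨one_pos, le_refl 1⟩ hs₂lt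
  set m : ℝ := min (φ s₁) (φ s₂) with hmdef
  have hm1 : 1 < m := lt_min hφs₁ hφs₂
  set M : ℝ := (1 + m) / 2 with hMdef
  have hM1 : 1 < M := by simp only [hMdef]; linarith
  have hMm : M < m := by simp only [hMdef]; linarith
  have hM0 : 0 < M := by linarith
  refine ⟨1 - 1 / M, by rw [sub_pos, div_lt_one hM0]; exact hM1, ?_⟩
  intro a b ha hb hab
  have h1δ : 1 - (1 - 1/M) = 1/M := by ring
  rw [h1δ, div_div_eq_mul_div, div_one] at hab
  -- hab : a ^ p / p + b ^ q / q ≤ a * b * M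
  set s : ℝ := a / b ^ (q / p) with hsdef
  have hbq : 0 < b ^ (q/p) := Real.rpow_pos_of_pos hb _
  have hs0 : 0 < s := div_pos ha hbq
  have hbq0 : (0:ℝ) < b ^ q := Real.rpow_pos_of_pos hb _
  have hA : a = s * b ^ (q/p) := by rw [hsdef, div_mul_cancel₀ _ hbq.ne']
  have hap : a ^ p = s ^ p * b ^ q := by
    rw [hA, Real.mul_rpow hs0.le hbq.le, ← Real.rpow_mul hb.le,
      div_mul_cancel₀ _ hp0.ne']
  have hab' : a * b = s * b ^ q := by
    rw [hA]
    have : b ^ (q/p) * b = b ^ q := by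
      nth_rewrite 2 [← Real.rpow_one b]
      rw [← Real.rpow_add hb, hqp1]
      congr 1
      ring
    rw [mul_assoc, this]
  rw [hap, hab'] at hab
  -- divide by b^q : s^p/p + 1/q ≤ s * M
  have key : s ^ p / p + 1 / q ≤ s * M := by
    have h := hab
    rw [show s ^ p * b ^ q / p = (s ^ p / p) * b ^ q by ring,
        show s * b ^ q * M = (s * M) * b ^ q by ring] at h
    have hbq1 : b ^ q / q = (1/q) * b ^ q := by ring
    rw [hbq1] at h
    have h2 : (s ^ p / p + 1 / q) * b ^ q ≤ (s * M) * b ^ q := by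
      calc (s ^ p / p + 1 / q) * b ^ q = s ^ p / p * b ^ q + 1 / q * b ^ q := by ring
        _ ≤ s * M * b ^ q := h
    exact le_of_mul_le_mul_right h2 hbq0
  have hφs : φ s ≤ M := by
    have hsp : s ^ (p - 1) = s ^ p / s := by
      rw [Real.rpow_sub hs0, Real.rpow_one]
    have : φ s = (s ^ p / p + 1 / q) / s := by
      simp only [hφdef, hsp]
      field_simp
    rw [this, div_le_iff₀ hs0]
    linarith [key]
  -- deduce s₂ < s < s₁
  have hss₁ : s < s₁ := by
    by_contra hcon
    push_neg at hcon
    have : φ s₁ ≤ φ s :=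
      hmono.monotoneOn (le_of_lt hs₁gt) (le_trans hs₁gt.le hcon) hcon
    have : m ≤ φ s := le_trans (min_le_left _ _) this
    linarith
  have hss₂ : s₂ < s := by
    by_contra hcon
    push_neg at hcon
    have hsle1 : s ≤ 1 := le_trans hcon hs₂lt.le
    have : φ s₂ ≤ φ s :=
      hanti.antitoneOn ⟨hs0, hsle1⟩ ⟨hs₂pos, hs₂lt.le⟩ hcon
    have : m ≤ φ s := le_trans (min_le_right _ _) this
    linarith
  -- translate back
  have hpq0 : 0 < p / q := div_pos hp0 hq0
  have ht : a ^ (p/q) / b = s ^ (p/q) := by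
    rw [hA, Real.mul_rpow hs0.le hbq.le, ← Real.rpow_mul hb.le,
      div_mul_div_comm, mul_comm q p, div_self (by positivity : p * q ≠ 0),
      Real.rpow_one]
    field_simp
  have hup : s ^ (p/q) < 1 + ε' := by
    have := Real.rpow_lt_rpow hs0.le hss₁ hpq0
    rwa [hs₁def, ← Real.rpow_mul (by linarith : (0:ℝ) ≤ 1 + ε'),
      div_mul_div_comm, mul_comm q p, div_self (by positivity : p * q ≠ 0),
      Real.rpow_one] at this
  have hlo : 1 - ε' < s ^ (p/q) := by
    have := Real.rpow_lt_rpow hs₂pos.le hss₂ hpq0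
    rwa [hs₂def, ← Real.rpow_mul h1ε'0.le,
      div_mul_div_comm, mul_comm q p, div_self (by positivity : p * q ≠ 0),
      Real.rpow_one] at this
  rw [ht, abs_lt]
  constructor <;> [linarith; linarith]
end

section
/- Let h ≤ g be two Lebesgue-integrable functions on the interval I = [0,1], and let (T_n) ⊂ (0,1] be a sequence such that liminf_{n→∞} (1/T_n) ∫_0^{T_n} g ds = A > 0 and lim_{n→∞} (1/T_n) ∫_0^{T_n} (g − h) ds = 0. Then for every ε > 0 there exists n_0 such that for all n ≥ n_0 the set {t ∈ [0, T_n] : (1−ε) g(t) < h(t)} has positive Lebesgue measure. -/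
open MeasureTheory Filter Set Topology

/-- Lemma 3.8. Let `h ≤ g` be integrable on `[0,1]` and `(T_n) ⊆ (0,1]`
with `liminf (1/T_n)∫₀^{T_n} g = A > 0` and `(1/T_n)∫₀^{T_n}(g−h) → 0`. Then for every
`ε > 0` eventually the set `{t ∈ [0,T_n] : (1−ε)g(t) < h(t)}` has positive measure. -/
theorem statement9
    (h g : ℝ → ℝ)
    (hint : IntegrableOn h (Set.Icc 0 1)) (gint : IntegrableOn g (Set.Icc 0 1))
    (hle : ∀ᵐ t ∂(volume.restrict (Set.Icc (0:ℝ) 1)), h t ≤ g t)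
    (T : ℕ → ℝ) (hT : ∀ n, T n ∈ Set.Ioc (0:ℝ) 1)
    (A : ℝ) (hA : 0 < A)
    (hliminf : Filter.liminf (fun n => (1 / T n) * ∫ s in Set.Ioc 0 (T n), g s) atTop = A)
    (hlim : Tendsto (fun n => (1 / T n) * ∫ s in Set.Ioc 0 (T n), (g s - h s)) atTop (𝓝 0)) :
    ∀ ε : ℝ, 0 < ε → ∃ n₀ : ℕ, ∀ n ≥ n₀,
      0 < volume {t ∈ Set.Icc (0:ℝ) (T n) | (1 - ε) * g t < h t} := by
  intro ε hε
  set u := fun n => (1 / T n) * ∫ s in Set.Ioc 0 (T n), g s with hu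
  have hS : ∀ᶠ n in atTop, A/2 < u n := by
    have hlf : sSup {a | ∀ᶠ n in atTop, a ≤ u n} = A := by
      rw [← hliminf, Filter.liminf_eq]
    have hne : {a | ∀ᶠ n in atTop, a ≤ u n}.Nonempty := by
      by_contra hcon
      rw [Set.not_nonempty_iff_eq_empty] at hcon
      rw [hcon, Real.sSup_empty] at hlf; linarith
    have hbdd : BddAbove {a | ∀ᶠ n in atTop, a ≤ u n} := by
      by_contra hcon
      rw [Real.sSup_of_not_bddAbove hcon] at hlf; linarith
    obtain ⟨a, ha, hA2⟩ := (lt_csSup_iff hbdd hne).mp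
      (by rw [hlf]; linarith : A/2 < sSup {a | ∀ᶠ n in atTop, a ≤ u n})
    exact ha.mono fun n hn => lt_of_lt_of_le hA2 hn
  have hE2 : ∀ᶠ n in atTop,
      (1 / T n) * ∫ s in Set.Ioc 0 (T n), (g s - h s) < ε * A / 2 :=
    hlim.eventually_lt_const (by positivity)
  obtain ⟨n₀, hn₀⟩ := (hS.and hE2).exists_forall_of_atTop
  refine ⟨n₀, fun n hn => ?_⟩
  obtain ⟨h1, h2⟩ := hn₀ n hn
  by_contra hzero
  push_neg at hzero
  have hz : volume {t ∈ Set.Icc (0:ℝ) (T n) | (1 - ε) * g t < h t} = 0 :=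
    le_antisymm hzero zero_le
  have hae : ∀ᵐ t ∂(volume.restrict (Set.Ioc 0 (T n))), h t ≤ (1 - ε) * g t := by
    have h0 := measure_eq_zero_iff_ae_notMem.mp hz
    have h0' := ae_restrict_of_ae (μ := volume) (s := Set.Ioc 0 (T n)) h0
    filter_upwards [h0', ae_restrict_mem measurableSet_Ioc] with t ht htmem
    have hticc : t ∈ Set.Icc (0:ℝ) (T n) := Set.Ioc_subset_Icc_self htmem
    by_contra hc; push_neg at hc
    exact ht ⟨hticc, hc⟩
  have hsub : Set.Ioc (0:ℝ) (T n) ⊆ Set.Icc 0 1 :=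
    fun t ht => ⟨le_of_lt ht.1, ht.2.trans (hT n).2⟩
  have gint' : IntegrableOn g (Set.Ioc 0 (T n)) := gint.mono_set hsub
  have hint' : IntegrableOn h (Set.Ioc 0 (T n)) := hint.mono_set hsub
  have hmono : ε * ∫ s in Set.Ioc 0 (T n), g s ≤ ∫ s in Set.Ioc 0 (T n), (g s - h s) := by
    rw [← MeasureTheory.integral_const_mul]
    exact integral_mono_ae (gint'.const_mul ε) (gint'.sub hint')
      (hae.mono fun t ht => by simp only [sub_mul, one_mul] at ht; simp only []; linarith)
  have hTpos : 0 < 1 / T n := by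
    have := (hT n).1; positivity
  have h1' : A/2 < (1 / T n) * ∫ s in Set.Ioc 0 (T n), g s := h1
  nlinarith [mul_le_mul_of_nonneg_left hmono hTpos.le, mul_pos hε hTpos]
end
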